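/- Universal property of the tensor coalgebra for coderivations (case of the identity coalgebra maps): let R be a commutative ring, V an R-module, and let Δ be the deconcatenation coproduct on T(V) = ⨁_{n∈ℕ} V^{⊗n}. Call an R-linear map D : T(V) → T(V) a coderivation if Δ ∘ D = (D ⊗ id + id ⊗ D) ∘ Δ. Then the assignment D ↦ p_1 ∘ D, where p_1 : T(V) → V is the projection onto the component V^{⊗1} = V, is a bijection between the set of coderivations of (T(V), Δ) and the set of R-linear maps T(V) → V; i.e., every R-linear β : T(V) → V extends to a unique coderivation D with p_1 ∘ D = β. -/

import Mathlib

open scoped DirectSum TensorProduct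

/-- The tensor module `T(V) = ⨁_{n∈ℕ} V^{⊗n}`. -/
abbrev TensorModule (R V : Type) [CommRing R] [AddCommGroup V] [Module R V] :=
  ⨁ n : ℕ, PiTensorProduct R (fun _ : Fin n => V)

/-- The canonical inclusion `V^{⊗n} → T(V)`. -/
noncomputable def tmOf (R V : Type) [CommRing R] [AddCommGroup V] [Module R V] (n : ℕ) :
    PiTensorProduct R (fun _ : Fin n => V) →ₗ[R] TensorModule R V :=
  DirectSum.lof R ℕ (fun n => PiTensorProduct R (fun _ : Fin n => V)) n

/-- The projection `p₁ : T(V) → V` onto the component `V^{⊗1} = V`. -/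
noncomputable def tmProj₁ (R V : Type) [CommRing R] [AddCommGroup V] [Module R V] :
    TensorModule R V →ₗ[R] V :=
  (PiTensorProduct.subsingletonEquiv (0 : Fin 1)).toLinearMap.comp
    (DirectSum.component R ℕ (fun n => PiTensorProduct R (fun _ : Fin n => V)) 1)

namespace TCD

open Function

variable (R V : Type) [CommRing R] [AddCommGroup V] [Module R V]

noncomputable def tm (m : ℕ) (u : ℕ → V) : TensorModule R V :=
  tmOf R V m (PiTensorProduct.tprod R fun i : Fin m => u i.val)

variable {R V}

theorem tm_congr {m m' : ℕ} (h : m = m') {u u' : ℕ → V} (hu : ∀ t, t < m → u t = u' t) :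
    tm R V m u = tm R V m' u' := by
  subst h
  unfold tm
  exact congrArg _ (congrArg (PiTensorProduct.tprod R) (funext fun i => hu i i.isLt))

variable (β : TensorModule R V →ₗ[R] V)

noncomputable def wfun (n : ℕ) (v : ℕ → V) (a c : ℕ) : ℕ → V := fun t =>
  if t < a then v t
  else if t = a then β (tm R V (n - a - c) (fun x => v (a + x)))
  else v (n - c + (t - (a + 1)))

noncomputable def G (n : ℕ) (v : ℕ → V) (a c : ℕ) : TensorModule R V :=
  tm R V (a + 1 + c) (wfun β n v a c)

theorem wfun_congr {n a c : ℕ} (h : a + c ≤ n) {v v' : ℕ → V}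
    (hv : ∀ x, x < n → v x = v' x) {t : ℕ} (ht : t < a + 1 + c) :
    wfun β n v a c t = wfun β n v' a c t := by
  unfold wfun
  split_ifs with h1 h2
  · exact hv t (by omega)
  · exact congrArg β (tm_congr rfl fun j hj => hv (a + j) (by omega))
  · exact hv _ (by omega)

theorem G_congr {n a c : ℕ} (h : a + c ≤ n) {v v' : ℕ → V}
    (hv : ∀ x, x < n → v x = v' x) : G β n v a c = G β n v' a c :=
  tm_congr rfl fun t ht => wfun_congr β h hv ht

def extnd (n : ℕ) (v : Fin n → V) : ℕ → V := fun x => if h : x < n then v ⟨x, h⟩ else 0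

theorem extnd_lt {n : ℕ} (v : Fin n → V) {x : ℕ} (h : x < n) : extnd n v x = v ⟨x, h⟩ := by
  unfold extnd; rw [dif_pos h]

theorem extnd_update_ne {n : ℕ} [DecidableEq (Fin n)] (v : Fin n → V) (i : Fin n) (z : V)
    {x : ℕ} (hx : x ≠ i.val) : extnd n (Function.update v i z) x = extnd n v x := by
  unfold extnd
  split_ifs with h
  · rw [Function.update_of_ne (fun he => hx (congrArg Fin.val he))]
  · rfl


section Entries

variable {n a c : ℕ} [DecidableEq (Fin n)]

theorem inner_update (h : a + c ≤ n) (v : Fin n → V) (i : Fin n) (hi1 : a ≤ i.val)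
    (hi2 : i.val < n - c) (z : V) :
    (fun j : Fin (n - a - c) => extnd n (Function.update v i z) (a + j.val))
      = Function.update (fun j : Fin (n - a - c) => extnd n v (a + j.val))
          ⟨i.val - a, by omega⟩ z := by
  funext j
  rcases eq_or_ne j ⟨i.val - a, by omega⟩ with rfl | hj
  · rw [Function.update_self]
    show extnd n (Function.update v i z) (a + (i.val - a)) = z
    have hia : a + (i.val - a) = i.val := by omega
    rw [hia, extnd_lt _ i.isLt]
    simp
  · rw [Function.update_of_ne hj]
    exact extnd_update_ne v i z (fun hv => hj (Fin.ext (show j.val = i.val - a by omega)))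

theorem entries_left (h : a + c ≤ n) (v : Fin n → V) (i : Fin n) (hi : i.val < a) (z : V) :
    (fun t : Fin (a + 1 + c) => wfun β n (extnd n (Function.update v i z)) a c t.val)
      = Function.update (fun t : Fin (a + 1 + c) => wfun β n (extnd n v) a c t.val)
          ⟨i.val, by omega⟩ z := by
  funext t
  rcases eq_or_ne t ⟨i.val, by omega⟩ with rfl | ht
  · rw [Function.update_self]
    show wfun β n (extnd n (Function.update v i z)) a c i.val = z
    unfold wfun
    rw [if_pos hi, extnd_lt _ i.isLt]
    simp
  · rw [Function.update_of_ne ht]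
    have htv : t.val ≠ i.val := fun hv => ht (Fin.ext hv)
    unfold wfun
    split_ifs with h1 h2
    · exact extnd_update_ne v i z htv
    · exact congrArg β (tm_congr rfl fun j hj => extnd_update_ne v i z (by omega))
    · exact extnd_update_ne v i z (by omega)

theorem entries_mid (h : a + c ≤ n) (v : Fin n → V) (i : Fin n) (hi1 : a ≤ i.val)
    (hi2 : i.val < n - c) (z : V) :
    (fun t : Fin (a + 1 + c) => wfun β n (extnd n (Function.update v i z)) a c t.val)
      = Function.update (fun t : Fin (a + 1 + c) => wfun β n (extnd n v) a c t.val)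
          ⟨a, by omega⟩
          (β (tmOf R V (n - a - c) (PiTensorProduct.tprod R
            (Function.update (fun j : Fin (n - a - c) => extnd n v (a + j.val))
              ⟨i.val - a, by omega⟩ z)))) := by
  funext t
  rcases eq_or_ne t ⟨a, by omega⟩ with rfl | ht
  · rw [Function.update_self]
    show wfun β n (extnd n (Function.update v i z)) a c a = _
    unfold wfun
    rw [if_neg (by omega), if_pos rfl]
    unfold tm
    exact congrArg β (congrArg _ (congrArg (PiTensorProduct.tprod R)
      (inner_update h v i hi1 hi2 z)))
  · rw [Function.update_of_ne ht]
    have htv : t.val ≠ a := fun hv => ht (Fin.ext hv)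
    unfold wfun
    split_ifs with h1
    · exact extnd_update_ne v i z (by omega)
    · exact extnd_update_ne v i z (by omega)

theorem entries_right (h : a + c ≤ n) (v : Fin n → V) (i : Fin n) (hi : n - c ≤ i.val) (z : V) :
    (fun t : Fin (a + 1 + c) => wfun β n (extnd n (Function.update v i z)) a c t.val)
      = Function.update (fun t : Fin (a + 1 + c) => wfun β n (extnd n v) a c t.val)
          ⟨a + 1 + (i.val - (n - c)), by have := i.isLt; omega⟩ z := by
  have hin := i.isLt
  funext t
  rcases eq_or_ne t ⟨a + 1 + (i.val - (n - c)), by omega⟩ with rfl | ht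
  · rw [Function.update_self]
    show wfun β n (extnd n (Function.update v i z)) a c (a + 1 + (i.val - (n - c))) = z
    unfold wfun
    rw [if_neg (by omega), if_neg (by omega)]
    have hidx : n - c + (a + 1 + (i.val - (n - c)) - (a + 1)) = i.val := by omega
    rw [hidx, extnd_lt _ i.isLt]
    simp
  · rw [Function.update_of_ne ht]
    have htv : t.val ≠ a + 1 + (i.val - (n - c)) := fun hv => ht (Fin.ext hv)
    have htlt := t.isLt
    unfold wfun
    split_ifs with h1 h2
    · exact extnd_update_ne v i z (by omega)
    · exact congrArg β (tm_congr rfl fun j hj => extnd_update_ne v i z (by omega))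
    · exact extnd_update_ne v i z (by omega)

end Entries

noncomputable def Mn (n a c : ℕ) (h : a + c ≤ n) :
    MultilinearMap R (fun _ : Fin n => V) (TensorModule R V) where
  toFun v := tmOf R V (a + 1 + c)
    (PiTensorProduct.tprod R fun t : Fin (a + 1 + c) => wfun β n (extnd n v) a c t.val)
  map_update_add' {dec} v i x y := by
    rcases lt_or_ge i.val a with hi | hi1
    · rw [entries_left β h v i hi, entries_left β h v i hi, entries_left β h v i hi,
        MultilinearMap.map_update_add, map_add]
    rcases lt_or_ge i.val (n - c) with hi2 | hi2
    · rw [entries_mid β h v i hi1 hi2, entries_mid β h v i hi1 hi2,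
        entries_mid β h v i hi1 hi2, MultilinearMap.map_update_add, map_add, map_add,
        MultilinearMap.map_update_add, map_add]
    · rw [entries_right β h v i hi2, entries_right β h v i hi2, entries_right β h v i hi2,
        MultilinearMap.map_update_add, map_add]
  map_update_smul' {dec} v i r x := by
    rcases lt_or_ge i.val a with hi | hi1
    · rw [entries_left β h v i hi, entries_left β h v i hi,
        MultilinearMap.map_update_smul, map_smul]
    rcases lt_or_ge i.val (n - c) with hi2 | hi2
    · rw [entries_mid β h v i hi1 hi2, entries_mid β h v i hi1 hi2,
        MultilinearMap.map_update_smul, map_smul, map_smul,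
        MultilinearMap.map_update_smul, map_smul]
    · rw [entries_right β h v i hi2, entries_right β h v i hi2,
        MultilinearMap.map_update_smul, map_smul]

noncomputable def Dmap : TensorModule R V →ₗ[R] TensorModule R V :=
  DirectSum.toModule R ℕ _ (fun n => PiTensorProduct.lift
    (∑ p ∈ Finset.range (n + 1) ×ˢ Finset.range (n + 1),
      if h : p.1 + p.2 ≤ n then Mn β n p.1 p.2 h else 0))

theorem Dmap_tm (n : ℕ) (v : ℕ → V) :
    Dmap β (tm R V n v) = ∑ p ∈ Finset.range (n + 1) ×ˢ Finset.range (n + 1),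
      if p.1 + p.2 ≤ n then G β n v p.1 p.2 else 0 := by
  unfold Dmap tm tmOf
  rw [DirectSum.toModule_lof, PiTensorProduct.lift.tprod, MultilinearMap.sum_apply]
  refine Finset.sum_congr rfl fun p hp => ?_
  by_cases h : p.1 + p.2 ≤ n
  · rw [dif_pos h, if_pos h]
    show tmOf R V _ (PiTensorProduct.tprod R fun t : Fin _ =>
      wfun β n (extnd n fun i : Fin n => v i.val) p.1 p.2 t.val) = G β n v p.1 p.2
    unfold G tm
    exact congrArg _ (congrArg (PiTensorProduct.tprod R) (funext fun t =>
      wfun_congr β h (fun x hx => extnd_lt _ hx) t.isLt))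
  · rw [dif_neg h, if_neg h]
    rfl


noncomputable def Pm (m : ℕ) :
    TensorModule R V →ₗ[R] PiTensorProduct R (fun _ : Fin m => V) :=
  DirectSum.component R ℕ (fun n => PiTensorProduct R (fun _ : Fin n => V)) m

theorem Pm_tm_self (m : ℕ) (u : ℕ → V) :
    Pm m (tm R V m u) = PiTensorProduct.tprod R (fun i : Fin m => u i.val) :=
  DirectSum.component.lof_self (R := R) _ _

theorem Pm_tm_ne {m k : ℕ} (h : k ≠ m) (u : ℕ → V) : Pm m (tm R V k u) = 0 := by
  unfold Pm tm tmOf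
  rw [DirectSum.component.of, dif_neg h]

theorem ext_gen {N : Type} [AddCommGroup N] [Module R N]
    {f g : TensorModule R V →ₗ[R] N}
    (h : ∀ (n : ℕ) (u : ℕ → V), f (tm R V n u) = g (tm R V n u)) : f = g := by
  apply DirectSum.linearMap_ext
  intro n
  apply PiTensorProduct.ext
  apply MultilinearMap.ext
  intro v
  have hv : (fun i : Fin n => extnd n v i.val) = v := funext fun i => by
    rw [extnd_lt _ i.isLt]
  have := h n (extnd n v)
  unfold tm tmOf at this
  rw [hv] at this
  simpa using this

noncomputable def one0 : PiTensorProduct R (fun _ : Fin 0 => V) :=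
  PiTensorProduct.tprod R (fun i : Fin 0 => i.elim0)

theorem tprod_fin0 (f : Fin 0 → V) : PiTensorProduct.tprod R f = one0 :=
  congrArg _ (funext fun i => i.elim0)

theorem one0_tmul_cancel {z : PiTensorProduct R (fun _ : Fin 0 => V)}
    (h : (one0 (R := R) (V := V)) ⊗ₜ[R] z = 0) : z = 0 := by
  have h2 : (TensorProduct.lid R (PiTensorProduct R (fun _ : Fin 0 => V)))
      (TensorProduct.map (PiTensorProduct.isEmptyEquiv (Fin 0)).toLinearMap
        (LinearMap.id (R := R) (M := PiTensorProduct R (fun _ : Fin 0 => V)))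
        ((one0 (R := R) (V := V)) ⊗ₜ[R] z)) = 0 := by rw [h]; simp
  rw [TensorProduct.map_tmul] at h2
  simp only [one0, PiTensorProduct.isEmptyEquiv_apply_tprod, LinearEquiv.coe_coe,
    LinearMap.id_coe, id_eq, TensorProduct.lid_tmul, one_smul] at h2
  exact h2

noncomputable def psi (m' : ℕ) :
    PiTensorProduct R (fun _ : Fin (m' + 1) => V) ≃ₗ[R]
      (PiTensorProduct R (fun _ : Fin 1 => V)) ⊗[R] (PiTensorProduct R (fun _ : Fin m' => V)) :=
  (PiTensorProduct.reindex R (fun _ : Fin (m' + 1) => V)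
      ((finSumFinEquiv (m := 1) (n := m')).trans (finCongr (by omega))).symm).trans
    (PiTensorProduct.tmulEquiv R V).symm

theorem psi_tprod (m' : ℕ) (u : ℕ → V) :
    psi (R := R) (V := V) m' (PiTensorProduct.tprod R (fun i : Fin (m' + 1) => u i.val)) =
      (PiTensorProduct.tprod R (fun i : Fin 1 => u i.val)) ⊗ₜ[R]
        (PiTensorProduct.tprod R (fun j : Fin m' => u (1 + j.val))) := by
  unfold psi
  rw [LinearEquiv.trans_apply, PiTensorProduct.reindex_tprod,
    PiTensorProduct.tmulEquiv_symm_apply]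
  congr 1 <;> exact congrArg _ (funext fun j => congrArg u (by simp))


section WithDelta

variable (Δ : TensorModule R V →ₗ[R] TensorModule R V ⊗[R] TensorModule R V)
variable (hΔ : ∀ (n : ℕ) (v : ℕ → V), Δ (tm R V n v) = ∑ i ∈ Finset.range (n + 1),
    tm R V i v ⊗ₜ[R] tm R V (n - i) (fun x => v (i + x)))

include hΔ

theorem P0_delta (y : TensorModule R V) :
    TensorProduct.map (Pm 0) (Pm 0) (Δ y) = (Pm 0 y) ⊗ₜ[R] (one0 (R := R) (V := V)) := by
  have : (TensorProduct.map (Pm 0) (Pm 0)).comp Δ =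
      (TensorProduct.mk R (PiTensorProduct R (fun _ : Fin 0 => V))
        (PiTensorProduct R (fun _ : Fin 0 => V))).flip (one0 (R := R) (V := V)) ∘ₗ Pm 0 := by
    refine ext_gen fun n u => ?_
    rw [LinearMap.comp_apply, hΔ n u, map_sum]
    rcases Nat.eq_zero_or_pos n with rfl | hn
    · rw [Finset.sum_range_one]
      simp only [Nat.sub_self, Nat.zero_add, TensorProduct.map_tmul, Pm_tm_self]
      simp only [LinearMap.comp_apply, LinearMap.flip_apply, TensorProduct.mk_apply,
        Pm_tm_self]
      simp only [tprod_fin0]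
    · rw [Finset.sum_eq_zero, LinearMap.comp_apply,
        Pm_tm_ne (k := n) (m := 0) (by omega), map_zero]
      intro i hi
      simp only [Finset.mem_range] at hi
      rcases Nat.eq_zero_or_pos i with rfl | hipos
      · rw [TensorProduct.map_tmul, Pm_tm_ne (k := n - 0) (m := 0) (by omega),
          TensorProduct.tmul_zero]
      · rw [TensorProduct.map_tmul, Pm_tm_ne (k := i) (m := 0) (by omega),
          TensorProduct.zero_tmul]
  exact LinearMap.congr_fun this y

theorem sigma_delta (m' : ℕ) (y : TensorModule R V) :
    TensorProduct.map (Pm 1) (Pm m') (Δ y) = psi m' (Pm (m' + 1) y) := by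
  have : (TensorProduct.map (Pm 1) (Pm m')).comp Δ =
      (psi (R := R) (V := V) m').toLinearMap ∘ₗ Pm (m' + 1) := by
    refine ext_gen fun n u => ?_
    rw [LinearMap.comp_apply, hΔ n u, map_sum, LinearMap.comp_apply]
    rcases eq_or_ne n (m' + 1) with rfl | hn
    · rw [Finset.sum_eq_single 1]
      · simp only [Nat.add_sub_cancel, TensorProduct.map_tmul, Pm_tm_self]
        rw [LinearEquiv.coe_coe, psi_tprod]
      · intro b _ hb1
        rw [TensorProduct.map_tmul, Pm_tm_ne (k := b) (m := 1) hb1,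
          TensorProduct.zero_tmul]
      · intro hmem
        exact absurd (Finset.mem_range.2 (by omega)) hmem
    · rw [Finset.sum_eq_zero, Pm_tm_ne (k := n) (m := m' + 1) hn, map_zero]
      intro i hi
      simp only [Finset.mem_range] at hi
      rcases eq_or_ne i 1 with rfl | hi1
      · rw [TensorProduct.map_tmul, Pm_tm_ne (k := n - 1) (m := m') (by omega),
          TensorProduct.tmul_zero]
      · rw [TensorProduct.map_tmul, Pm_tm_ne (k := i) (m := 1) hi1,
          TensorProduct.zero_tmul]
  exact LinearMap.congr_fun this y


theorem P0_coderiv (D : TensorModule R V →ₗ[R] TensorModule R V)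
    (hc : Δ.comp D = (TensorProduct.map D LinearMap.id
      + TensorProduct.map LinearMap.id D).comp Δ) (n : ℕ) (u : ℕ → V) :
    Pm 0 (D (tm R V n u)) = 0 := by
  have h1 := P0_delta Δ hΔ (D (tm R V n u))
  have hcx : Δ (D (tm R V n u)) = TensorProduct.map D LinearMap.id (Δ (tm R V n u))
      + TensorProduct.map LinearMap.id D (Δ (tm R V n u)) := by
    simpa using LinearMap.congr_fun hc (tm R V n u)
  rw [hcx, hΔ n u] at h1
  simp only [LinearMap.add_apply, map_sum, map_add, TensorProduct.map_tmul,
    LinearMap.id_coe, id_eq] at h1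
  rw [Finset.sum_eq_single n, Finset.sum_eq_single 0] at h1
  · have hz : tm R V (n - 0) (fun x => u (0 + x)) = tm R V n u :=
      tm_congr (by omega) (fun t ht => congrArg u (by omega))
    rw [hz] at h1
    have hnn : tm R V (n - n) (fun x => u (n + x)) = tm R V 0 u :=
      tm_congr (by omega) (fun t ht => absurd ht (by omega))
    rw [hnn, Pm_tm_self] at h1
    simp only [tprod_fin0] at h1
    have := left_eq_add.mp h1.symm
    exact one0_tmul_cancel this
  · intro b hb hb0
    rw [Pm_tm_ne (k := b) (m := 0) hb0, TensorProduct.zero_tmul]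
  · intro h0
    exact absurd (Finset.mem_range.2 (by omega)) h0
  · intro b hb hbn
    simp only [Finset.mem_range] at hb
    rw [Pm_tm_ne (k := n - b) (m := 0) (by omega), TensorProduct.tmul_zero]
  · intro h0
    exact absurd (Finset.mem_range.2 (by omega)) h0

omit hΔ in
theorem P1_proj (D : TensorModule R V →ₗ[R] TensorModule R V)
    (hp : (tmProj₁ R V).comp D = β) (x : TensorModule R V) :
    Pm 1 (D x) = (PiTensorProduct.subsingletonEquiv (0 : Fin 1)).symm (β x) := by
  have h1 := LinearMap.congr_fun hp x
  unfold tmProj₁ at h1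
  rw [LinearMap.comp_apply, LinearMap.comp_apply] at h1
  exact (LinearEquiv.eq_symm_apply _).2 h1

theorem coderiv_unique (D₁ D₂ : TensorModule R V →ₗ[R] TensorModule R V)
    (hc1 : Δ.comp D₁ = (TensorProduct.map D₁ LinearMap.id
      + TensorProduct.map LinearMap.id D₁).comp Δ)
    (hp1 : (tmProj₁ R V).comp D₁ = β)
    (hc2 : Δ.comp D₂ = (TensorProduct.map D₂ LinearMap.id
      + TensorProduct.map LinearMap.id D₂).comp Δ)
    (hp2 : (tmProj₁ R V).comp D₂ = β) : D₁ = D₂ := by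
  have key : ∀ m (n : ℕ) (u : ℕ → V),
      Pm m (D₁ (tm R V n u)) = Pm m (D₂ (tm R V n u)) := by
    intro m
    induction m using Nat.strong_induction_on with
    | _ m ih =>
      rcases m with _ | m
      · intro n u
        rw [P0_coderiv Δ hΔ D₁ hc1 n u, P0_coderiv Δ hΔ D₂ hc2 n u]
      rcases m with _ | m'
      · intro n u
        rw [P1_proj β D₁ hp1, P1_proj β D₂ hp2]
      intro n u
      apply (psi (R := R) (V := V) (m' + 1)).injective
      rw [← sigma_delta Δ hΔ (m' + 1) (D₁ (tm R V n u)),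
        ← sigma_delta Δ hΔ (m' + 1) (D₂ (tm R V n u))]
      have hcx1 : Δ (D₁ (tm R V n u)) = TensorProduct.map D₁ LinearMap.id (Δ (tm R V n u))
          + TensorProduct.map LinearMap.id D₁ (Δ (tm R V n u)) := by
        simpa using LinearMap.congr_fun hc1 (tm R V n u)
      have hcx2 : Δ (D₂ (tm R V n u)) = TensorProduct.map D₂ LinearMap.id (Δ (tm R V n u))
          + TensorProduct.map LinearMap.id D₂ (Δ (tm R V n u)) := by
        simpa using LinearMap.congr_fun hc2 (tm R V n u)
      rw [hcx1, hcx2, hΔ n u]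
      simp only [LinearMap.add_apply, map_sum, map_add, TensorProduct.map_tmul,
        LinearMap.id_coe, id_eq]
      congr 1
      · refine Finset.sum_congr rfl fun i _ => ?_
        rw [ih 1 (by omega) i u]
      · refine Finset.sum_congr rfl fun i _ => ?_
        rw [ih (m' + 1) (by omega) (n - i) (fun x => u (i + x))]
  refine ext_gen fun n u => ?_
  exact DirectSum.ext_component R fun m => key m n u

end WithDelta

theorem wfun_lt_a {n a c t : ℕ} {v : ℕ → V} (ht : t < a) : wfun β n v a c t = v t :=
  if_pos ht

theorem wfun_ge {n a c t : ℕ} {v : ℕ → V} (ht : a + 1 ≤ t) :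
    wfun β n v a c t = v (n - c + (t - (a + 1))) := by
  unfold wfun
  rw [if_neg (by omega), if_neg (by omega)]

theorem wfun_shift {n a c s : ℕ} (h : a + c ≤ n) (hs : s ≤ a) {v : ℕ → V} (t : ℕ) :
    wfun β n v a c (s + t) = wfun β (n - s) (fun x => v (s + x)) (a - s) c t := by
  unfold wfun
  by_cases h1 : t < a - s
  · rw [if_pos (show s + t < a by omega), if_pos h1]
  by_cases h2 : t = a - s
  · rw [if_neg (show ¬ s + t < a by omega), if_pos (show s + t = a by omega),
      if_neg (show ¬ t < a - s by omega), if_pos h2]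
    exact congrArg β (tm_congr (by omega) (fun j hj => congrArg v (by omega)))
  · rw [if_neg (show ¬ s + t < a by omega), if_neg (show ¬ s + t = a by omega),
      if_neg (show ¬ t < a - s by omega), if_neg h2]
    exact congrArg v (by omega)

theorem wfun_cut {n a c d : ℕ} (h : a + c ≤ n) (hd : d ≤ c) {v : ℕ → V} (t : ℕ) :
    wfun β n v a c t = wfun β (n - c + d) v a d t := by
  unfold wfun
  by_cases h1 : t < a
  · rw [if_pos h1, if_pos h1]
  by_cases h2 : t = a
  · rw [if_neg h1, if_pos h2, if_neg h1, if_pos h2]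
    exact congrArg β (tm_congr (by omega) (fun j hj => rfl))
  · rw [if_neg h1, if_neg h2, if_neg h1, if_neg h2]
    exact congrArg v (by omega)

theorem sigex1 {x y : Σ _ : ℕ × ℕ, ℕ} (h1 : x.1 = y.1) (h2 : x.2 = y.2) : x = y := by
  rcases x with ⟨p, s⟩
  rcases y with ⟨q, t⟩
  dsimp at h1 h2
  subst h1; subst h2; rfl

theorem sigex2 {x y : Σ _ : ℕ, ℕ × ℕ} (h1 : x.1 = y.1) (h2 : x.2 = y.2) : x = y := by
  rcases x with ⟨p, s⟩
  rcases y with ⟨q, t⟩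
  dsimp at h1 h2
  subst h1; subst h2; rfl

theorem tmProj1_tm_one (u : ℕ → V) : tmProj₁ R V (tm R V 1 u) = u 0 := by
  unfold tmProj₁ tm tmOf
  rw [LinearMap.comp_apply, DirectSum.component.lof_self]
  exact PiTensorProduct.subsingletonEquiv_apply_tprod _ _

theorem tmProj1_tm_ne {k : ℕ} (hk : k ≠ 1) (u : ℕ → V) : tmProj₁ R V (tm R V k u) = 0 := by
  unfold tmProj₁ tm tmOf
  rw [LinearMap.comp_apply, DirectSum.component.of, dif_neg hk]
  simp

theorem proj_Dmap : (tmProj₁ R V).comp (Dmap β) = β := by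
  refine ext_gen fun n u => ?_
  rw [LinearMap.comp_apply, Dmap_tm, map_sum]
  rw [Finset.sum_eq_single (0, 0)]
  · rw [if_pos (by omega : (0:ℕ) + 0 ≤ n)]
    unfold G
    simp only [Nat.add_zero, Nat.zero_add]
    rw [tmProj1_tm_one]
    unfold wfun
    rw [if_neg (by omega), if_pos rfl]
    exact congrArg β (tm_congr (by omega) fun t ht => congrArg u (by omega))
  · intro p hp hpne
    have hor : ¬(p.1 = 0 ∧ p.2 = 0) := fun hand => hpne (Prod.ext hand.1 hand.2)
    by_cases h : p.1 + p.2 ≤ n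
    · rw [if_pos h]
      unfold G
      rw [tmProj1_tm_ne (by omega)]
    · rw [if_neg h, map_zero]
  · intro h0
    exact absurd (by
      simp only [Finset.mem_product, Finset.mem_range]
      omega) h0


theorem sumA (n : ℕ) (u : ℕ → V) :
    ∑ x ∈ (((Finset.range (n + 1)) ×ˢ (Finset.range (n + 1))).filter
        (fun p => p.1 + p.2 ≤ n)).sigma (fun p => Finset.range (p.1 + 1)),
      (tm R V x.2 (wfun β n u x.1.1 x.1.2)) ⊗ₜ[R]
        (tm R V (x.1.1 + 1 + x.1.2 - x.2) (fun y => wfun β n u x.1.1 x.1.2 (x.2 + y)))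
    = ∑ y ∈ (Finset.range (n + 1)).sigma (fun i => ((Finset.range (n + 1)) ×ˢ
          (Finset.range (n + 1))).filter (fun q => q.1 + q.2 ≤ n - i)),
      (tm R V y.1 u) ⊗ₜ[R] (G β (n - y.1) (fun x => u (y.1 + x)) y.2.1 y.2.2) := by
  refine Finset.sum_nbij' (fun x => ⟨x.2, (x.1.1 - x.2, x.1.2)⟩)
    (fun y => ⟨(y.1 + y.2.1, y.2.2), y.1⟩) ?_ ?_ ?_ ?_ ?_
  · intro x hx
    simp only [Finset.mem_sigma, Finset.mem_filter, Finset.mem_product,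
      Finset.mem_range] at hx ⊢
    omega
  · intro y hy
    simp only [Finset.mem_sigma, Finset.mem_filter, Finset.mem_product,
      Finset.mem_range] at hy ⊢
    omega
  · intro x hx
    simp only [Finset.mem_sigma, Finset.mem_filter, Finset.mem_product,
      Finset.mem_range] at hx
    exact sigex1 (Prod.ext (by dsimp; omega) (by dsimp)) (by dsimp)
  · intro y hy
    simp only [Finset.mem_sigma, Finset.mem_filter, Finset.mem_product,
      Finset.mem_range] at hy
    exact sigex2 (by dsimp) (Prod.ext (by dsimp; omega) (by dsimp))
  · intro x hx
    simp only [Finset.mem_sigma, Finset.mem_filter, Finset.mem_product,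
      Finset.mem_range] at hx
    obtain ⟨⟨⟨ha, hc⟩, hg⟩, hs⟩ := hx
    have hs' : x.2 ≤ x.1.1 := by omega
    congr 1
    · exact tm_congr rfl fun t ht => wfun_lt_a β (by omega)
    · show _ = G β (n - x.2) (fun z => u (x.2 + z)) (x.1.1 - x.2) x.1.2
      unfold G
      exact tm_congr (by omega) fun t ht => wfun_shift β hg hs' t

theorem sumB (n : ℕ) (u : ℕ → V) :
    ∑ x ∈ (((Finset.range (n + 1)) ×ˢ (Finset.range (n + 1))).filter
        (fun p => p.1 + p.2 ≤ n)).sigma (fun p => Finset.range (p.2 + 1)),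
      (tm R V (x.1.1 + 1 + x.2) (wfun β n u x.1.1 x.1.2)) ⊗ₜ[R]
        (tm R V (x.1.1 + 1 + x.1.2 - (x.1.1 + 1 + x.2))
          (fun y => wfun β n u x.1.1 x.1.2 (x.1.1 + 1 + x.2 + y)))
    = ∑ y ∈ (Finset.range (n + 1)).sigma (fun i => ((Finset.range (n + 1)) ×ˢ
          (Finset.range (n + 1))).filter (fun q => q.1 + q.2 ≤ i)),
      (G β y.1 u y.2.1 y.2.2) ⊗ₜ[R] (tm R V (n - y.1) (fun x => u (y.1 + x))) := by
  refine Finset.sum_nbij' (fun x => ⟨n - x.1.2 + x.2, (x.1.1, x.2)⟩)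
    (fun y => ⟨(y.2.1, n - y.1 + y.2.2), y.2.2⟩) ?_ ?_ ?_ ?_ ?_
  · intro x hx
    simp only [Finset.mem_sigma, Finset.mem_filter, Finset.mem_product,
      Finset.mem_range] at hx ⊢
    omega
  · intro y hy
    simp only [Finset.mem_sigma, Finset.mem_filter, Finset.mem_product,
      Finset.mem_range] at hy ⊢
    omega
  · intro x hx
    simp only [Finset.mem_sigma, Finset.mem_filter, Finset.mem_product,
      Finset.mem_range] at hx
    exact sigex1 (Prod.ext (by dsimp) (by dsimp; omega)) (by dsimp)
  · intro y hy
    simp only [Finset.mem_sigma, Finset.mem_filter, Finset.mem_product,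
      Finset.mem_range] at hy
    exact sigex2 (by dsimp; omega) (Prod.ext (by dsimp) (by dsimp))
  · intro x hx
    simp only [Finset.mem_sigma, Finset.mem_filter, Finset.mem_product,
      Finset.mem_range] at hx
    obtain ⟨⟨⟨ha, hc⟩, hg⟩, hd⟩ := hx
    have hd' : x.2 ≤ x.1.2 := by omega
    dsimp only
    congr 1
    · show _ = G β (n - x.1.2 + x.2) u x.1.1 x.2
      unfold G
      exact tm_congr rfl fun t ht => wfun_cut β hg hd' t
    · exact tm_congr (by omega) fun t ht =>
        (wfun_ge β (by omega)).trans (congrArg u (by omega))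



theorem Dmap_coderiv (Δ : TensorModule R V →ₗ[R] TensorModule R V ⊗[R] TensorModule R V)
    (hΔ : ∀ (n : ℕ) (v : ℕ → V), Δ (tm R V n v) = ∑ i ∈ Finset.range (n + 1),
      tm R V i v ⊗ₜ[R] tm R V (n - i) (fun x => v (i + x))) :
    Δ.comp (Dmap β) = (TensorProduct.map (Dmap β) LinearMap.id
      + TensorProduct.map LinearMap.id (Dmap β)).comp Δ := by
  refine ext_gen (N := TensorModule R V ⊗[R] TensorModule R V) fun n u => ?_
  rw [LinearMap.comp_apply]
  rw [LinearMap.comp_apply]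
  rw [Dmap_tm]
  rw [map_sum]
  rw [hΔ n u]
  rw [LinearMap.add_apply]
  rw [map_sum]
  rw [map_sum]
  simp only [TensorProduct.map_tmul, LinearMap.id_coe, id_eq, Dmap_tm]
  -- compute the left-hand side
  have hL : ∑ p ∈ (Finset.range (n + 1)) ×ˢ (Finset.range (n + 1)),
      Δ (if p.1 + p.2 ≤ n then G β n u p.1 p.2 else 0)
      = (∑ p ∈ (Finset.range (n + 1)) ×ˢ (Finset.range (n + 1)),
          if p.1 + p.2 ≤ n then ∑ s ∈ Finset.range (p.1 + 1),
            (tm R V s (wfun β n u p.1 p.2)) ⊗ₜ[R]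
              (tm R V (p.1 + 1 + p.2 - s) (fun y => wfun β n u p.1 p.2 (s + y))) else 0)
      + (∑ p ∈ (Finset.range (n + 1)) ×ˢ (Finset.range (n + 1)),
          if p.1 + p.2 ≤ n then ∑ d ∈ Finset.range (p.2 + 1),
            (tm R V (p.1 + 1 + d) (wfun β n u p.1 p.2)) ⊗ₜ[R]
              (tm R V (p.1 + 1 + p.2 - (p.1 + 1 + d))
                (fun y => wfun β n u p.1 p.2 (p.1 + 1 + d + y))) else 0) := by
    rw [← Finset.sum_add_distrib]
    refine Finset.sum_congr rfl fun p hp => ?_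
    by_cases h : p.1 + p.2 ≤ n
    · rw [if_pos h, if_pos h, if_pos h]
      rw [show G β n u p.1 p.2 = tm R V (p.1 + 1 + p.2) (wfun β n u p.1 p.2) from rfl,
        hΔ (p.1 + 1 + p.2) (wfun β n u p.1 p.2)]
      rw [show p.1 + 1 + p.2 + 1 = (p.1 + 1) + (p.2 + 1) by omega, Finset.sum_range_add]
    · rw [if_neg h, if_neg h, if_neg h, map_zero, add_zero]
  rw [hL]
  -- first piece equals the (1 ⊗ D) part
  have hA : (∑ p ∈ (Finset.range (n + 1)) ×ˢ (Finset.range (n + 1)),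
      if p.1 + p.2 ≤ n then ∑ s ∈ Finset.range (p.1 + 1),
        (tm R V s (wfun β n u p.1 p.2)) ⊗ₜ[R]
          (tm R V (p.1 + 1 + p.2 - s) (fun y => wfun β n u p.1 p.2 (s + y))) else 0)
      = ∑ i ∈ Finset.range (n + 1),
          (tm R V i u) ⊗ₜ[R] (∑ q ∈ (Finset.range (n - i + 1)) ×ˢ (Finset.range (n - i + 1)),
            if q.1 + q.2 ≤ n - i then G β (n - i) (fun x => u (i + x)) q.1 q.2 else 0) := by
    rw [← Finset.sum_filter, Finset.sum_sigma', sumA β n u]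
    rw [Finset.sum_sigma]
    refine Finset.sum_congr rfl fun i hi => ?_
    simp only [Finset.mem_range] at hi
    dsimp only
    rw [TensorProduct.tmul_sum]
    simp only [TensorProduct.tmul_ite]
    rw [Finset.sum_filter]
    refine (Finset.sum_subset ?_ ?_).symm
    · intro q hq
      simp only [Finset.mem_product, Finset.mem_range] at hq ⊢
      omega
    · intro q hq hq2
      simp only [Finset.mem_product, Finset.mem_range] at hq hq2
      rw [if_neg (by omega)]
  -- second piece equals the (D ⊗ 1) part
  have hB : (∑ p ∈ (Finset.range (n + 1)) ×ˢ (Finset.range (n + 1)),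
      if p.1 + p.2 ≤ n then ∑ d ∈ Finset.range (p.2 + 1),
        (tm R V (p.1 + 1 + d) (wfun β n u p.1 p.2)) ⊗ₜ[R]
          (tm R V (p.1 + 1 + p.2 - (p.1 + 1 + d))
            (fun y => wfun β n u p.1 p.2 (p.1 + 1 + d + y))) else 0)
      = ∑ i ∈ Finset.range (n + 1),
          (∑ q ∈ (Finset.range (i + 1)) ×ˢ (Finset.range (i + 1)),
            if q.1 + q.2 ≤ i then G β i u q.1 q.2 else 0) ⊗ₜ[R]
            (tm R V (n - i) (fun x => u (i + x))) := by
    rw [← Finset.sum_filter, Finset.sum_sigma', sumB β n u]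
    rw [Finset.sum_sigma]
    refine Finset.sum_congr rfl fun i hi => ?_
    simp only [Finset.mem_range] at hi
    dsimp only
    rw [TensorProduct.sum_tmul]
    simp only [TensorProduct.ite_tmul]
    rw [Finset.sum_filter]
    refine (Finset.sum_subset ?_ ?_).symm
    · intro q hq
      simp only [Finset.mem_product, Finset.mem_range] at hq ⊢
      omega
    · intro q hq hq2
      simp only [Finset.mem_product, Finset.mem_range] at hq hq2
      rw [if_neg (by omega)]
  rw [hA, hB]
  exact add_comm _ _

end TCD

/-- Universal property of the tensor coalgebra `(T(V), Δ)` (with the deconcatenation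
coproduct `Δ`) for coderivations: every linear map `β : T(V) → V` extends to a unique
coderivation `D : T(V) → T(V)` (i.e. `Δ ∘ D = (D ⊗ id + id ⊗ D) ∘ Δ`) with
`p₁ ∘ D = β`; hence `D ↦ p₁ ∘ D` is a bijection from coderivations onto linear maps
`T(V) → V`. -/
theorem tensor_coalgebra_coderivation_universal {R V : Type} [CommRing R]
    [AddCommGroup V] [Module R V]
    (Δ : TensorModule R V →ₗ[R] TensorModule R V ⊗[R] TensorModule R V)
    (hΔ : ∀ (n : ℕ) (v : ℕ → V),
      Δ (tmOf R V n (PiTensorProduct.tprod R (fun i : Fin n => v i.val))) =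
        ∑ i ∈ Finset.range (n + 1),
          (tmOf R V i (PiTensorProduct.tprod R (fun j : Fin i => v j.val))) ⊗ₜ[R]
            (tmOf R V (n - i) (PiTensorProduct.tprod R (fun j : Fin (n - i) => v (i + j.val)))))
    (β : TensorModule R V →ₗ[R] V) :
    ∃! D : TensorModule R V →ₗ[R] TensorModule R V,
      Δ.comp D =
        (TensorProduct.map D LinearMap.id + TensorProduct.map LinearMap.id D).comp Δ ∧
      (tmProj₁ R V).comp D = β := by
  have hΔ' : ∀ (n : ℕ) (v : ℕ → V), Δ (TCD.tm R V n v) = ∑ i ∈ Finset.range (n + 1),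
      TCD.tm R V i v ⊗ₜ[R] TCD.tm R V (n - i) (fun x => v (i + x)) := hΔ
  refine ⟨TCD.Dmap β, ⟨TCD.Dmap_coderiv β Δ hΔ', TCD.proj_Dmap β⟩, fun E hE => ?_⟩
  exact TCD.coderiv_unique β Δ hΔ' E (TCD.Dmap β) hE.1 hE.2
    (TCD.Dmap_coderiv β Δ hΔ') (TCD.proj_Dmap β)
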